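/- Let (T, f) be a depth-decomposition of a vector matroid M = (X, I) of depth d. Then there exists a depth-decomposition (T', f') of M of depth at most d such that every primary branch of T' is at capacity. -/
import Mathlib


/-! Infrastructure: rooted trees, depth-decompositions and branch-depth of matroids,
following the definitions of Kardoš, Král', Liebenau, Mach and of the paper
"Optimal matrix tree-depth and a row-invariant parameterized algorithm for
integer programming". -/

/-- A rooted tree on a (nonempty) finite vertex type `V`, given by its root and its
parent function: the parent of the root is the root itself, and from any vertex the
root is reached by iterating the parent function. -/
structure RTree (V : Type) [Fintype V] [DecidableEq V] where
  root : V
  parent : V → V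
  parent_root : parent root = root
  reach : ∀ v : V, ∃ n : ℕ, parent^[n] v = root

namespace RTree

variable {V : Type} [Fintype V] [DecidableEq V]

/-- A vertex is a leaf if it has no children. -/
def IsLeaf (T : RTree V) (v : V) : Prop :=
  ∀ u : V, T.parent u = v → u = v

/-- The non-root vertices on the path from `v` to the root of `T`; they are in bijective
correspondence with the edges of this path (each such vertex corresponds to the edge
joining it to its parent). -/
def pathEdges (T : RTree V) (v : V) : Set V :=
  {u | u ≠ T.root ∧ ∃ n : ℕ, T.parent^[n] v = u}

/-- The number of edges of the tree. -/
def edgeCount (T : RTree V) : ℕ := Fintype.card V - 1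

/-- The depth of a vertex: the number of edges on the path from the root to it. -/
noncomputable def depthV (T : RTree V) (v : V) : ℕ :=
  sInf {n : ℕ | T.parent^[n] v = T.root}

/-- The depth of the tree: the maximum number of edges on a path from the root to a leaf. -/
noncomputable def depth (T : RTree V) : ℕ :=
  Finset.univ.sup T.depthV

/-- The descendants of a vertex `u` (including `u` itself). -/
def desc (T : RTree V) (u : V) : Set V := {w | ∃ n : ℕ, T.parent^[n] w = u}

/-- The number of children of a vertex. -/
noncomputable def childCount (T : RTree V) (u : V) : ℕ :=
  {w : V | T.parent w = u ∧ w ≠ u}.ncard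

/-- A rooted tree is a rooted path if every vertex has at most one child. -/
def IsRootedPath (T : RTree V) : Prop := ∀ u : V, T.childCount u ≤ 1

/-- `a` is a strict ancestor of `v`. -/
def IsStrictAncestor (T : RTree V) (a v : V) : Prop :=
  a ≠ v ∧ ∃ n : ℕ, T.parent^[n] v = a

/-- A branch of `T` consists of a vertex `u`, exactly one child `u'` of `u` and all
descendants of `u'`; it is hence determined by the non-root vertex `u'` and denoted
here by `u'`.  Its root is `parent u'`, its vertex set is `{parent u'} ∪ desc u'`, and
its edge number `‖S‖` is `(desc u').ncard`.  The branch determined by `u'` is primary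
if its root has at least two children and every (strict) ancestor of its root has
exactly one child. -/
def IsPrimaryBranch (T : RTree V) (u' : V) : Prop :=
  u' ≠ T.root ∧ 2 ≤ T.childCount (T.parent u') ∧
    ∀ a : V, T.IsStrictAncestor a (T.parent u') → T.childCount a = 1

end RTree

/-- `(T, f)` is a depth-decomposition of the matroid on ground set `X` with rank
function `rk` and rank `r`: `f` maps elements of the matroid to leaves of `T`, the
number of edges of `T` equals the rank `r` of the matroid, and the rank of every
`X' ⊆ X` is at most the number of edges contained in the union of the paths in `T`
from the root to the vertices `f x`, `x ∈ X'`. -/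
def IsDepthDecompOn {X V : Type} [Fintype V] [DecidableEq V]
    (rk : Set X → ℕ) (r : ℕ) (T : RTree V) (f : X → V) : Prop :=
  (∀ x : X, T.IsLeaf (f x)) ∧ T.edgeCount = r ∧
    ∀ X' : Set X, rk X' ≤ (⋃ x ∈ X', T.pathEdges (f x)).ncard

/-- The branch-depth of the matroid on ground set `X` with rank function `rk` and
rank `r`: the smallest depth of a rooted tree forming a depth-decomposition. -/
noncomputable def branchDepth {X : Type} (rk : Set X → ℕ) (r : ℕ) : ℕ :=
  sInf {d : ℕ | ∃ (nV : ℕ) (T : RTree (Fin (nV + 1))) (f : X → Fin (nV + 1)),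
    IsDepthDecompOn rk r T f ∧ T.depth = d}

/-- The branch of `T` determined by the non-root vertex `u'` is at capacity: the rank
of the set `Ŝ` of matroid elements mapped by `f` to the leaves of the branch equals the
number `‖S‖` of edges of the branch plus the number of edges on the path from the root
of `T` to the root of the branch. -/
def AtCapacity {X V : Type} [Fintype V] [DecidableEq V]
    (rk : Set X → ℕ) (T : RTree V) (f : X → V) (u' : V) : Prop :=
  rk {x | f x ∈ T.desc u'} = (T.desc u').ncard + T.depthV (T.parent u')

/-- The rank function of the vector matroid formed by the family of vectors `v`:
the rank of a subset is the dimension of its linear hull. -/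
noncomputable def vecRk (F : Type) {W ι : Type} [Field F] [AddCommGroup W] [Module F W]
    (v : ι → W) (S : Set ι) : ℕ :=
  Module.finrank F (Submodule.span F (v '' S))

/-- `(T, f, g)` is an extended depth-decomposition of the vector matroid formed by the
family of vectors `v`: `(T, f)` is a depth-decomposition, the images under `g` of the
non-root vertices of `T` form a basis of the linear hull of the vectors, and every
vector `v x` lies in the linear hull of the `g`-image of the non-root vertices on the
path from `f x` to the root. -/
def IsExtDepthDecomp (F : Type) {W ι V : Type} [Field F] [AddCommGroup W] [Module F W]
    [Fintype V] [DecidableEq V] (v : ι → W) (T : RTree V) (f : ι → V) (g : V → W) : Prop :=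
  IsDepthDecompOn (vecRk F v) (vecRk F v Set.univ) T f ∧
  LinearIndependent F (fun u : {u : V // u ≠ T.root} => g u.val) ∧
  Submodule.span F (g '' {u : V | u ≠ T.root}) = Submodule.span F (Set.range v) ∧
  ∀ x : ι, v x ∈ Submodule.span F (g '' T.pathEdges (f x))

namespace RTree

variable {V : Type} [Fintype V] [DecidableEq V] (T : RTree V)

lemma iterate_root (n : ℕ) : T.parent^[n] T.root = T.root := by
  induction n with
  | zero => rfl
  | succ n ih => rw [Function.iterate_succ_apply, T.parent_root, ih]

lemma depthV_iterate_eq_root (v : V) : T.parent^[T.depthV v] v = T.root :=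
  Nat.sInf_mem (T.reach v)

lemma depthV_le {v : V} {n : ℕ} (h : T.parent^[n] v = T.root) : T.depthV v ≤ n :=
  Nat.sInf_le h

lemma iterate_ne_root_of_lt_depthV {v : V} {m : ℕ} (h : m < T.depthV v) :
    T.parent^[m] v ≠ T.root := fun hc => absurd (T.depthV_le hc) (by omega)

lemma depthV_root : T.depthV T.root = 0 :=
  Nat.le_zero.mp (T.depthV_le (by rfl))

lemma ne_root_of_depthV_pos {v : V} (h : 0 < T.depthV v) : v ≠ T.root := by
  intro hv; rw [hv, T.depthV_root] at h; omega

lemma depthV_pos_of_ne_root {v : V} (h : v ≠ T.root) : 0 < T.depthV v := by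
  rcases Nat.eq_zero_or_pos (T.depthV v) with h0 | h0
  · exact absurd (by simpa [h0] using T.depthV_iterate_eq_root v) h
  · exact h0

lemma iterate_root_of_ge {v : V} {m n : ℕ} (h : T.parent^[m] v = T.root) (hmn : m ≤ n) :
    T.parent^[n] v = T.root := by
  obtain ⟨k, rfl⟩ := Nat.exists_eq_add_of_le hmn
  rw [Nat.add_comm, Function.iterate_add_apply, h, T.iterate_root]

lemma depthV_parent_add_one {v : V} (h : v ≠ T.root) :
    T.depthV v = T.depthV (T.parent v) + 1 := by
  have h1 : 0 < T.depthV v := T.depthV_pos_of_ne_root h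
  have h2 : T.parent^[T.depthV v - 1] (T.parent v) = T.root := by
    have := T.depthV_iterate_eq_root v
    rwa [show T.depthV v = (T.depthV v - 1) + 1 by omega, Function.iterate_succ_apply] at this
  have h3 : T.depthV (T.parent v) ≤ T.depthV v - 1 := T.depthV_le h2
  have h4 : T.depthV v ≤ T.depthV (T.parent v) + 1 := by
    apply T.depthV_le
    rw [Function.iterate_succ_apply]
    exact T.depthV_iterate_eq_root (T.parent v)
  omega

/-- If `parent^[n] w = u` with `u ≠ root` then `depthV w = n + depthV u`. -/
lemma depthV_eq_of_iterate {w u : V} {n : ℕ} (hu : u ≠ T.root)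
    (h : T.parent^[n] w = u) : T.depthV w = n + T.depthV u := by
  have hle : T.depthV w ≤ n + T.depthV u := by
    apply T.depthV_le
    rw [Nat.add_comm, Function.iterate_add_apply, h]
    exact T.depthV_iterate_eq_root u
  have hge : n + T.depthV u ≤ T.depthV w := by
    by_contra hc
    push_neg at hc
    have hmem : T.parent^[T.depthV w] w = T.root := T.depthV_iterate_eq_root w
    rcases Nat.lt_or_ge (T.depthV w) n with hm | hm
    · have : T.parent^[n] w = T.root := T.iterate_root_of_ge hmem (le_of_lt hm)
      exact hu (h ▸ this)
    · have : T.parent^[T.depthV w - n] u = T.root := by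
        rw [← h, ← Function.iterate_add_apply]
        rw [show T.depthV w - n + n = T.depthV w by omega]
        exact hmem
      have := T.depthV_le this
      omega
  omega

lemma depthV_le_depth (v : V) : T.depthV v ≤ T.depth :=
  Finset.le_sup (Finset.mem_univ v)

end RTree
section Transport

variable {V V' : Type} [Fintype V] [DecidableEq V] [Fintype V'] [DecidableEq V']

lemma conj_iterate (e : V ≃ V') (p : V → V) (n : ℕ) (w : V') :
    (⇑e ∘ p ∘ ⇑e.symm)^[n] w = e (p^[n] (e.symm w)) := by
  induction n generalizing w with
  | zero => simp
  | succ n ih =>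
      rw [Function.iterate_succ_apply, Function.iterate_succ_apply, ih]
      simp

/-- Relabelling of a rooted tree along a bijection. -/
def RTree.relabel (T : RTree V) (e : V ≃ V') : RTree V' where
  root := e T.root
  parent := ⇑e ∘ T.parent ∘ ⇑e.symm
  parent_root := by simp [T.parent_root]
  reach := by
    intro w
    obtain ⟨n, hn⟩ := T.reach (e.symm w)
    exact ⟨n, by rw [conj_iterate]; rw [hn]⟩

namespace RTree

variable (T : RTree V) (e : V ≃ V')

@[simp] lemma relabel_root : (T.relabel e).root = e T.root := rfl

lemma relabel_isLeaf (v : V) : (T.relabel e).IsLeaf (e v) ↔ T.IsLeaf v := by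
  constructor
  · intro h u hu
    have := h (e u) (by simp [relabel, hu])
    exact e.injective this
  · intro h u hu
    have : T.parent (e.symm u) = v := by
      have : e (T.parent (e.symm u)) = e v := hu
      exact e.injective this
    have := h _ this
    rw [← this]; simp

lemma relabel_pathEdges (v : V) : (T.relabel e).pathEdges (e v) = e '' T.pathEdges v := by
  ext w
  simp only [pathEdges, Set.mem_setOf_eq, Set.mem_image, relabel, conj_iterate]
  constructor
  · rintro ⟨hw, n, hn⟩
    refine ⟨e.symm w, ⟨fun hc => hw (e.symm_apply_eq.mp hc), n, ?_⟩, by simp⟩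
    · simp at hn; exact e.injective (by simpa using hn)
  · rintro ⟨u, ⟨hu, n, hn⟩, rfl⟩
    exact ⟨fun hc => hu (e.injective hc), n, by simp [hn]⟩

lemma relabel_depthV (v : V) : (T.relabel e).depthV (e v) = T.depthV v := by
  unfold depthV
  congr 1
  ext n
  simp only [Set.mem_setOf_eq, relabel, conj_iterate]
  constructor
  · intro h; exact e.injective (by simpa using h)
  · intro h; simp [h]

lemma relabel_depth : (T.relabel e).depth = T.depth := by
  unfold depth
  apply le_antisymm
  · apply Finset.sup_le
    intro w _
    rw [show w = e (e.symm w) by simp, relabel_depthV]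
    exact Finset.le_sup (Finset.mem_univ _)
  · apply Finset.sup_le
    intro w _
    rw [← relabel_depthV T e w]
    exact Finset.le_sup (Finset.mem_univ _)

lemma relabel_childCount (v : V) : (T.relabel e).childCount (e v) = T.childCount v := by
  unfold childCount
  have : {w : V' | (T.relabel e).parent w = e v ∧ w ≠ e v} = e '' {w : V | T.parent w = v ∧ w ≠ v} := by
    ext w
    simp only [Set.mem_setOf_eq, Set.mem_image, relabel]
    constructor
    · rintro ⟨h1, h2⟩
      exact ⟨e.symm w, ⟨e.injective (by simpa using h1), fun hc => h2 (by rw [← hc]; simp)⟩, by simp⟩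
    · rintro ⟨u, ⟨h1, h2⟩, rfl⟩
      exact ⟨by simp [h1], fun hc => h2 (e.injective hc)⟩
  rw [this, Set.ncard_image_of_injective _ e.injective]

lemma relabel_desc (u : V) : (T.relabel e).desc (e u) = e '' T.desc u := by
  ext w
  simp only [desc, Set.mem_setOf_eq, Set.mem_image, relabel, conj_iterate]
  constructor
  · rintro ⟨n, hn⟩
    exact ⟨e.symm w, ⟨n, e.injective (by simpa using hn)⟩, by simp⟩
  · rintro ⟨x, ⟨n, hn⟩, rfl⟩
    exact ⟨n, by simp [hn]⟩

lemma relabel_isStrictAncestor (a v : V) :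
    (T.relabel e).IsStrictAncestor (e a) (e v) ↔ T.IsStrictAncestor a v := by
  unfold IsStrictAncestor
  simp only [relabel, conj_iterate, ne_eq]
  constructor
  · rintro ⟨h1, n, hn⟩
    exact ⟨fun hc => h1 (by rw [hc]), n, e.injective (by simpa using hn)⟩
  · rintro ⟨h1, n, hn⟩
    exact ⟨fun hc => h1 (e.injective hc), n, by simp [hn]⟩

lemma relabel_isPrimaryBranch (u : V) :
    (T.relabel e).IsPrimaryBranch (e u) ↔ T.IsPrimaryBranch u := by
  unfold IsPrimaryBranch
  have hpar : (T.relabel e).parent (e u) = e (T.parent u) := by simp [relabel]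
  rw [hpar]
  constructor
  · rintro ⟨h1, h2, h3⟩
    refine ⟨fun hc => h1 (by rw [hc]; rfl), by rwa [relabel_childCount] at h2, ?_⟩
    intro a ha
    have := h3 (e a) ((relabel_isStrictAncestor T e a (T.parent u)).mpr ha)
    rwa [relabel_childCount] at this
  · rintro ⟨h1, h2, h3⟩
    refine ⟨fun hc => h1 (e.injective hc), by rwa [relabel_childCount], ?_⟩
    intro a ha
    rw [show a = e (e.symm a) by simp] at ha ⊢
    rw [relabel_childCount]
    exact h3 _ ((relabel_isStrictAncestor T e _ _).mp ha)

end RTree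

/-- Transport of a full "good" depth-decomposition along a bijection into `Fin (nV+1)`. -/
lemma transport_good {X : Type} {V : Type} [Fintype V] [DecidableEq V]
    (rk : Set X → ℕ) (r : ℕ) (T : RTree V) (f : X → V)
    (hdd : IsDepthDecompOn rk r T f) {d : ℕ} (hdep : T.depth ≤ d)
    (hcap : ∀ u', T.IsPrimaryBranch u' → AtCapacity rk T f u') :
    ∃ (nV : ℕ) (T' : RTree (Fin (nV + 1))) (f' : X → Fin (nV + 1)),
      IsDepthDecompOn rk r T' f' ∧ T'.depth ≤ d ∧
      ∀ u' : Fin (nV + 1), T'.IsPrimaryBranch u' → AtCapacity rk T' f' u' := by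
  have hpos : 0 < Fintype.card V := Fintype.card_pos_iff.mpr ⟨T.root⟩
  set nV := Fintype.card V - 1 with hnV
  have hcard : Fintype.card V = nV + 1 := by omega
  let e : V ≃ Fin (nV + 1) := (Fintype.equivFin V).trans (finCongr hcard)
  refine ⟨nV, T.relabel e, e ∘ f, ?_, ?_, ?_⟩
  · obtain ⟨h1, h2, h3⟩ := hdd
    refine ⟨fun x => by simpa [RTree.relabel_isLeaf] using h1 x, ?_, ?_⟩
    · unfold RTree.edgeCount at h2 ⊢
      simpa [hcard] using h2
    · intro X'
      have hun : (⋃ x ∈ X', (T.relabel e).pathEdges ((e ∘ f) x)) =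
          e '' (⋃ x ∈ X', T.pathEdges (f x)) := by
        rw [Set.image_iUnion₂]
        exact Set.iUnion₂_congr fun x _ => T.relabel_pathEdges e (f x)
      rw [hun, Set.ncard_image_of_injective _ e.injective]
      exact h3 X'
  · rw [T.relabel_depth e]; exact hdep
  · intro u' hprim
    rw [show u' = e (e.symm u') by simp] at hprim ⊢
    have hcap' := hcap _ ((T.relabel_isPrimaryBranch e _).mp hprim)
    unfold AtCapacity at hcap' ⊢
    have hpar : (T.relabel e).parent (e (e.symm u')) = e (T.parent (e.symm u')) := by
      simp [RTree.relabel]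
    rw [hpar, RTree.relabel_depthV, RTree.relabel_desc,
      Set.ncard_image_of_injective _ e.injective]
    have hset : {x | (e ∘ f) x ∈ e '' T.desc (e.symm u')} = {x | f x ∈ T.desc (e.symm u')} := by
      ext x; simp only [Set.mem_setOf_eq, Function.comp_apply]
      exact ⟨fun h => by obtain ⟨y, hy, hxy⟩ := h; rwa [← e.injective hxy], fun h => ⟨f x, h, rfl⟩⟩
    rw [hset]
    exact hcap'

end Transport
section Surgery

open Set Submodule

variable {V : Type} [Fintype V] [DecidableEq V]

lemma RTree.iterate_agree {V : Type} [Fintype V] [DecidableEq V] {p q : V → V} {w : V} {n : ℕ}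
    (h : ∀ i < n, q (p^[i] w) = p (p^[i] w)) : q^[n] w = p^[n] w := by
  induction n with
  | zero => rfl
  | succ n ih =>
      rw [Function.iterate_succ_apply', Function.iterate_succ_apply',
        ih (fun i hi => h i (by omega)), h n (by omega)]

lemma RTree.iterate_mem_closed {V : Type} {p : V → V} {S : Set V}
    (hS : ∀ u ∈ S, p u ∈ S) {w : V} (hw : w ∈ S) : ∀ n, p^[n] w ∈ S := by
  intro n
  induction n with
  | zero => exact hw
  | succ n ih => rw [Function.iterate_succ_apply']; exact hS _ ih

lemma RTree.eq_root_of_parent_fix (T : RTree V) {w : V} (h : T.parent w = w) : w = T.root := by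
  obtain ⟨n, hn⟩ := T.reach w
  have key : ∀ m : ℕ, T.parent^[m] w = w := by
    intro m
    induction m with
    | zero => rfl
    | succ m ih => rw [Function.iterate_succ_apply', ih, h]
  rw [← key n, hn]

lemma vecRk_empty (F : Type) {W ι : Type} [Field F] [AddCommGroup W] [Module F W]
    (v : ι → W) : vecRk F v (∅ : Set ι) = 0 := by
  unfold vecRk
  rw [Set.image_empty, Submodule.span_empty]
  exact finrank_bot F W

lemma vecRk_span_union (F : Type) {W ι : Type} [Field F] [AddCommGroup W] [Module F W]
    (v : ι → W) (A B : Set ι) :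
    Submodule.span F (v '' (A ∪ B)) = Submodule.span F (v '' A) ⊔ Submodule.span F (v '' B) := by
  rw [Set.image_union, Submodule.span_union]

end Surgery
section Surgery2

open Set Submodule

variable {F W ι V : Type} [Field F] [AddCommGroup W] [Module F W] [Fintype ι]
  [Fintype V] [DecidableEq V]

lemma surgery (v : ι → W) (T : RTree V) (f : ι → V)
    (hdd : IsDepthDecompOn (vecRk F v) (vecRk F v Set.univ) T f)
    (u1 : V) (hprim : T.IsPrimaryBranch u1)
    (hbad : ¬ AtCapacity (vecRk F v) T f u1) :
    ∃ T1 : RTree V, IsDepthDecompOn (vecRk F v) (vecRk F v Set.univ) T1 f ∧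
      T1.depth ≤ T.depth ∧
      ∀ u' : V, T1.IsPrimaryBranch u' → AtCapacity (vecRk F v) T1 f u' := by
  classical
  obtain ⟨hleaf, hedge, hvalid⟩ := hdd
  obtain ⟨hu1root, hcc2, hanc1⟩ := hprim
  set b : V := T.parent u1 with hbdef
  set t : ℕ := T.depthV b with htdef
  set c : ℕ → V := fun i => T.parent^[t - i] b with hcdef
  have hct : c t = b := by simp [hcdef]
  have hc0 : c 0 = T.root := by simpa [hcdef] using T.depthV_iterate_eq_root b
  -- depth of chain vertices
  have hiterc : ∀ i ≤ t, T.parent^[i] (c i) = T.root := by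
    intro i hi
    have : T.parent^[i] (c i) = T.parent^[i + (t - i)] b := by
      rw [Function.iterate_add_apply]
    rw [this, show i + (t - i) = t by omega]
    exact T.depthV_iterate_eq_root b
  have hdepthc : ∀ i ≤ t, T.depthV (c i) = i := by
    intro i hi
    have h1 : T.depthV (c i) ≤ i := T.depthV_le (hiterc i hi)
    have h2 : T.parent^[T.depthV (c i) + (t - i)] b = T.root := by
      rw [Function.iterate_add_apply]
      exact T.depthV_iterate_eq_root (c i)
    have h3 : t ≤ T.depthV (c i) + (t - i) := T.depthV_le h2
    omega
  have hcinj : ∀ i ≤ t, ∀ j ≤ t, c i = c j → i = j := by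
    intro i hi j hj hij
    have := hdepthc i hi
    rw [hij, hdepthc j hj] at this
    omega
  have hparc : ∀ i < t, T.parent (c (i + 1)) = c i := by
    intro i hi
    show T.parent (T.parent^[t - (i+1)] b) = T.parent^[t - i] b
    rw [show t - i = (t - (i+1)) + 1 by omega, Function.iterate_succ_apply']
  have hcdown : ∀ i ≤ t, ∀ n : ℕ, T.parent^[n] (c i) = c (i - n) := by
    intro i hi n
    induction n with
    | zero => rfl
    | succ n ih =>
        rw [Function.iterate_succ_apply', ih]
        rcases Nat.lt_or_ge n i with h | h
        · rw [show i - n = (i - (n+1)) + 1 by omega]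
          exact hparc _ (by omega)
        · rw [show i - n = 0 by omega, show i - (n+1) = 0 by omega, hc0, T.parent_root]
  -- u1 and its descendants
  have hu1b : u1 ≠ b := by
    intro h
    exact hu1root (T.eq_root_of_parent_fix (by rw [← hbdef, ← h]))
  have hbroot : T.parent^[t] b = T.root := T.depthV_iterate_eq_root b
  have hdepthu1 : T.depthV u1 = t + 1 := by
    rw [T.depthV_parent_add_one hu1root, ← hbdef, ← htdef]
  set descS : Set V := T.desc u1 with hdescSdef
  have hu1descS : u1 ∈ descS := ⟨0, rfl⟩
  have hdesc_depth : ∀ w ∈ descS, t + 1 ≤ T.depthV w := by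
    rintro w ⟨n, hn⟩
    rw [T.depthV_eq_of_iterate hu1root hn, hdepthu1]
    omega
  have hcnotdesc : ∀ i ≤ t, c i ∉ descS := by
    intro i hi hmem
    have := hdesc_depth _ hmem
    rw [hdepthc i hi] at this
    omega
  set chainF : Set V := c '' Set.Icc 0 t with hchainFdef
  have hrootchain : T.root ∈ chainF := ⟨0, by simp, hc0⟩
  have hbchain : b ∈ chainF := ⟨t, by simp, hct⟩
  have hdisjCD : ∀ w ∈ chainF, w ∉ descS := by
    rintro w ⟨i, hi, rfl⟩
    exact hcnotdesc i hi.2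
  have hu1nchain : u1 ∉ chainF := fun h => hdisjCD u1 h hu1descS
  -- children structure on the chain
  have hchild1 : ∀ i < t, T.childCount (c i) = 1 := by
    intro i hi
    apply hanc1
    refine ⟨fun h => ?_, ⟨t - i, rfl⟩⟩
    · have : i = t := hcinj i (by omega) t le_rfl (by rw [h, hct])
      omega
  have hchildmem : ∀ i < t, T.parent (c (i+1)) = c i ∧ c (i+1) ≠ c i := by
    intro i hi
    exact ⟨hparc i hi, fun h => by have := hcinj (i+1) (by omega) i (by omega) h; omega⟩
  have hchildset : ∀ i < t, {w : V | T.parent w = c i ∧ w ≠ c i} = {c (i + 1)} := by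
    intro i hi
    obtain ⟨a, ha⟩ := Set.ncard_eq_one.mp (hchild1 i hi)
    have hmem : c (i+1) ∈ {w : V | T.parent w = c i ∧ w ≠ c i} := hchildmem i hi
    rw [ha] at hmem ⊢
    simp at hmem
    rw [hmem]
  -- parent closure facts
  have hclosC : ∀ w ∈ chainF, T.parent w ∈ chainF := by
    rintro w ⟨i, hi, rfl⟩
    simp only [Set.mem_Icc] at hi
    rcases Nat.eq_zero_or_pos i with h0 | h0
    · subst h0; rw [hc0, T.parent_root]; exact hrootchain
    · have hp : T.parent (c i) = c (i - 1) := by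
        have := hparc (i-1) (by omega)
        rw [show i - 1 + 1 = i by omega] at this
        exact this
      rw [hp]
      exact ⟨i - 1, by simp only [Set.mem_Icc]; omega, rfl⟩
  have hclosD : ∀ w ∈ descS, w ≠ u1 → T.parent w ∈ descS := by
    rintro w ⟨n, hn⟩ hw
    match n, hn with
    | 0, hn => exact absurd hn hw
    | (m+1), hn => exact ⟨m, by rwa [Function.iterate_succ_apply] at hn⟩
  have hparu1 : T.parent u1 = b := hbdef.symm
  set REST : Set V := {w | w ∉ chainF ∧ w ∉ descS} with hRESTdef
  have hclosR : ∀ w ∈ REST, T.parent w ∈ REST ∨ T.parent w = b := by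
    intro w hw
    by_cases hc : T.parent w ∈ chainF
    · obtain ⟨i, hi, hiw⟩ := hc
      simp only [Set.mem_Icc] at hi
      rcases Nat.lt_or_ge i t with hit | hit
      · -- then w would be on the chain
        exfalso
        have hwmem : w ∈ {w : V | T.parent w = c i ∧ w ≠ c i} := by
          refine ⟨hiw.symm, fun h => ?_⟩
          exact hw.1 ⟨i, by simp; omega, h.symm⟩
        rw [hchildset i hit] at hwmem
        exact hw.1 ⟨i+1, by simp; omega, by simpa using hwmem.symm⟩
      · right; rw [← hiw, show i = t by omega, hct]
    · by_cases hd : T.parent w ∈ descS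
      · exfalso
        obtain ⟨n, hn⟩ := hd
        exact hw.2 ⟨n + 1, by rwa [Function.iterate_succ_apply]⟩
      · exact Or.inl ⟨hc, hd⟩
  -- every vertex reaches b or is on the chain
  have hreachb : ∀ w : V, w ∈ chainF ∨ ∃ n, T.parent^[n] w = b := by
    intro w
    have : ∀ m : ℕ, ∀ w : V, T.depthV w = m → (w ∈ chainF ∨ ∃ n, T.parent^[n] w = b) := by
      intro m
      induction m using Nat.strong_induction_on with
      | _ m ih =>
        intro w hw
        by_cases hroot : w = T.root
        · exact Or.inl (hroot ▸ hrootchain)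
        · have hdp : T.depthV (T.parent w) < m := by
            have := T.depthV_parent_add_one hroot
            omega
          rcases ih _ hdp (T.parent w) rfl with hch | ⟨n, hn⟩
          · obtain ⟨i, hi, hiw⟩ := hch
            simp only [Set.mem_Icc] at hi
            rcases Nat.lt_or_ge i t with hit | hit
            · by_cases hwc : w = c i
              · exact Or.inl (hwc ▸ ⟨i, by simp; omega, rfl⟩)
              · have hwmem : w ∈ {w : V | T.parent w = c i ∧ w ≠ c i} := ⟨hiw.symm, hwc⟩
                rw [hchildset i hit] at hwmem
                exact Or.inl ⟨i + 1, by simp; omega, by simpa using hwmem.symm⟩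
            · right
              exact ⟨1, by simpa using by rw [← hiw, show i = t by omega, hct]⟩
          · exact Or.inr ⟨n + 1, by rwa [Function.iterate_succ_apply]⟩
    exact this (T.depthV w) w rfl
  -- leaves are outside the chain
  have hfnotchain : ∀ x : ι, f x ∉ chainF := by
    rintro x ⟨i, hi, hiw⟩
    simp only [Set.mem_Icc] at hi
    rcases Nat.lt_or_ge i t with hit | hit
    · have h1 : c (i+1) = f x := hleaf x (c (i+1)) (by rw [hparc i hit, hiw])
      have : i + 1 = i := hcinj (i+1) (by omega) i (by omega) (by rw [h1, ← hiw])
      omega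
    · have hib : c i = b := by rw [show i = t by omega, hct]
      have h2 : u1 = f x := hleaf x u1 (by rw [← hbdef, ← hib, hiw])
      exact hu1b (by rw [h2, ← hiw, hib])
  set P1 : Set ι := {x | f x ∈ descS} with hP1def
  have hfREST : ∀ x, x ∉ P1 → f x ∈ REST := fun x hx => ⟨hfnotchain x, hx⟩
  set inn : ι → Set V := fun x => T.pathEdges (f x) \ chainF with hinndef
  have hfx_b : ∀ x : ι, ∃ n, T.parent^[n] (f x) = b := by
    intro x
    rcases hreachb (f x) with h | h
    · exact absurd h (hfnotchain x)
    · exact h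
  have hpe : ∀ x : ι, T.pathEdges (f x) = inn x ∪ c '' Set.Icc 1 t := by
    intro x
    ext u
    constructor
    · intro hu
      by_cases hc : u ∈ chainF
      · obtain ⟨i, hi, rfl⟩ := hc
        simp only [Set.mem_Icc] at hi
        rcases Nat.eq_zero_or_pos i with h0 | h0
        · exact absurd (by rw [h0, hc0]) hu.1
        · exact Or.inr ⟨i, by simp only [Set.mem_Icc]; omega, rfl⟩
      · exact Or.inl ⟨hu, hc⟩
    · intro hu
      rcases hu with hu | ⟨i, hi, rfl⟩
      · exact hu.1
      · simp only [Set.mem_Icc] at hi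
        obtain ⟨n, hn⟩ := hfx_b x
        refine ⟨fun h => ?_, ⟨(t - i) + n, ?_⟩⟩
        · have : i = 0 := hcinj i (by omega) 0 (by omega) (by rw [h, hc0])
          omega
        · rw [Function.iterate_add_apply, hn]
  have hcard_c : ∀ a k : ℕ, k ≤ t → (c '' Set.Icc a k).ncard = k + 1 - a := by
    intro a k hk
    rw [Set.ncard_image_of_injOn (fun i hi j hj hij => by
      simp only [Set.mem_Icc] at hi hj
      exact hcinj i (by omega) j (by omega) hij)]
    rw [← Finset.coe_Icc, Set.ncard_coe_finset, Nat.card_Icc]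
  have hvalid' : ∀ X : Set ι, X.Nonempty → vecRk F v X ≤ t + (⋃ x ∈ X, inn x).ncard := by
    intro X hX
    have hun : (⋃ x ∈ X, T.pathEdges (f x)) = (⋃ x ∈ X, inn x) ∪ c '' Set.Icc 1 t := by
      ext u
      simp only [Set.mem_iUnion, Set.mem_union]
      constructor
      · rintro ⟨x, hx, hu⟩
        rw [hpe x] at hu
        rcases hu with h | h
        · exact Or.inl ⟨x, hx, h⟩
        · exact Or.inr h
      · rintro (⟨x, hx, hu⟩ | h)
        · exact ⟨x, hx, by rw [hpe x]; exact Or.inl hu⟩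
        · obtain ⟨x, hx⟩ := hX
          exact ⟨x, hx, by rw [hpe x]; exact Or.inr h⟩
    have hd : Disjoint (⋃ x ∈ X, inn x) (c '' Set.Icc 1 t) := by
      rw [Set.disjoint_left]
      rintro u hu hu2
      simp only [Set.mem_iUnion] at hu
      obtain ⟨x, hx, hu⟩ := hu
      refine hu.2 ?_
      obtain ⟨i, hi, rfl⟩ := hu2
      exact ⟨i, by simp only [Set.mem_Icc] at hi ⊢; omega, rfl⟩
    have hv := hvalid X
    rw [hun, Set.ncard_union_eq hd (Set.toFinite _) (Set.toFinite _), hcard_c 1 t le_rfl] at hv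
    omega
  -- cardinality of V
  have huniv : (Set.univ : Set V) = (chainF ∪ descS) ∪ REST := by
    ext w
    simp only [Set.mem_univ, Set.mem_union, true_iff, hRESTdef, Set.mem_setOf_eq]
    tauto
  have hdisj1 : Disjoint chainF descS := Set.disjoint_left.mpr hdisjCD
  have hdisj2 : Disjoint (chainF ∪ descS) REST := by
    rw [Set.disjoint_left]
    rintro w (h | h) hw
    · exact hw.1 h
    · exact hw.2 h
  set s1 : ℕ := descS.ncard with hs1def
  set sR : ℕ := REST.ncard with hsRdef
  have hcardV : Fintype.card V = (t + 1) + s1 + sR := by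
    have h0 : (Set.univ : Set V).ncard = Fintype.card V := by
      rw [Set.ncard_univ, Nat.card_eq_fintype_card]
    rw [huniv, Set.ncard_union_eq hdisj2 (Set.toFinite _) (Set.toFinite _),
      Set.ncard_union_eq hdisj1 (Set.toFinite _) (Set.toFinite _), hcard_c 0 t le_rfl] at h0
    omega
  set r : ℕ := vecRk F v Set.univ with hrdef
  have hredge : Fintype.card V = r + 1 := by
    have h1 : Fintype.card V - 1 = r := hedge
    have hpos : 0 < Fintype.card V := Fintype.card_pos_iff.mpr ⟨T.root⟩
    omega
  have hrsum : r = t + s1 + sR := by omega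
  -- inner paths stay in their region
  have hinn_desc : ∀ x ∈ P1, inn x ⊆ descS := by
    intro x hx u hu
    obtain ⟨⟨hne, n, hn⟩, hnc⟩ := hu
    have hclosed : ∀ w ∈ descS ∪ chainF, T.parent w ∈ descS ∪ chainF := by
      rintro w (hw | hw)
      · by_cases hwu : w = u1
        · subst hwu; rw [← hbdef]; exact Or.inr hbchain
        · exact Or.inl (hclosD w hw hwu)
      · exact Or.inr (hclosC w hw)
    have := RTree.iterate_mem_closed hclosed (Or.inl hx : f x ∈ descS ∪ chainF) n
    rw [hn] at this
    rcases this with h | h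
    · exact h
    · exact absurd h hnc
  have hinn_rest : ∀ x ∉ P1, inn x ⊆ REST := by
    intro x hx u hu
    obtain ⟨⟨hne, n, hn⟩, hnc⟩ := hu
    have hclosed : ∀ w ∈ REST ∪ chainF, T.parent w ∈ REST ∪ chainF := by
      rintro w (hw | hw)
      · rcases hclosR w hw with h | h
        · exact Or.inl h
        · exact Or.inr (h ▸ hbchain)
      · exact Or.inr (hclosC w hw)
    have := RTree.iterate_mem_closed hclosed (Or.inl (hfREST x hx) : f x ∈ REST ∪ chainF) n
    rw [hn] at this
    rcases this with h | h
    · exact h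
    · exact absurd h hnc
  -- ranks
  set P' : Set ι := P1ᶜ with hP'def
  set rP1 : ℕ := vecRk F v P1 with hrP1def
  set rP' : ℕ := vecRk F v P' with hrP'def
  have hP1bound : rP1 ≤ t + s1 := by
    rcases Set.eq_empty_or_nonempty P1 with h | h
    · rw [hrP1def, h, vecRk_empty]; omega
    · have h1 := hvalid' P1 h
      have h2 : (⋃ x ∈ P1, inn x).ncard ≤ s1 := by
        apply Set.ncard_le_ncard _ (Set.toFinite _)
        exact Set.iUnion₂_subset (fun x hx => hinn_desc x hx)
      omega
  have hP'bound : rP' ≤ t + sR := by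
    rcases Set.eq_empty_or_nonempty P' with h | h
    · rw [hrP'def, h, vecRk_empty]; omega
    · have h1 := hvalid' P' h
      have h2 : (⋃ x ∈ P', inn x).ncard ≤ sR := by
        apply Set.ncard_le_ncard _ (Set.toFinite _)
        exact Set.iUnion₂_subset (fun x hx => hinn_rest x hx)
      omega
  haveI hfd1 : FiniteDimensional F (Submodule.span F (v '' P1)) :=
    FiniteDimensional.span_of_finite F ((Set.toFinite P1).image v)
  haveI hfd2 : FiniteDimensional F (Submodule.span F (v '' P')) :=
    FiniteDimensional.span_of_finite F ((Set.toFinite P').image v)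
  set kstar : ℕ :=
    Module.finrank F ↥(Submodule.span F (v '' P1) ⊓ Submodule.span F (v '' P')) with hkdef
  have hmodular : rP1 + rP' = r + kstar := by
    have h1 : Submodule.span F (v '' P1) ⊔ Submodule.span F (v '' P') =
        Submodule.span F (v '' (Set.univ : Set ι)) := by
      rw [← vecRk_span_union, Set.union_compl_self]
    have h2 := Submodule.finrank_sup_add_finrank_inf_eq
      (Submodule.span F (v '' P1)) (Submodule.span F (v '' P'))
    rw [h1] at h2
    have h3 : r + kstar = rP1 + rP' := h2
    omega
  have hbad' : rP1 ≠ s1 + t := by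
    intro h
    exact hbad h
  set e1 : ℕ := t + sR - rP' with he1def
  set e' : ℕ := t + s1 - rP1 with he'def
  have he1 : e1 + rP' = t + sR := by omega
  have he' : e' + rP1 = t + s1 := by omega
  have he'pos : 1 ≤ e' := by omega
  have hsum : kstar + e1 + e' = t := by omega
  have hcapA : rP1 = (e1 + s1) + kstar := by omega
  have hcapB : rP' = (e' + sR) + kstar := by omega
  have hkk : kstar + e1 + 1 ≤ t := by omega
  -- the new tree: rewire two parents
  set pB : V := c (kstar + e1 + 1) with hpBdef
  set aBot : V := c (kstar + e1) with haBotdef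
  set beta : V := c kstar with hbetadef
  have hchain_mem : ∀ j ≤ t, c j ∈ chainF := fun j hj => ⟨j, by simp only [Set.mem_Icc]; omega, rfl⟩
  have hcne_u1 : ∀ j ≤ t, c j ≠ u1 := fun j hj h => hu1nchain (h ▸ hchain_mem j hj)
  have hu1pB : u1 ≠ pB := fun h => hcne_u1 _ hkk h.symm
  set p1 : V → V := fun w => if w = u1 then aBot else if w = pB then beta else T.parent w
    with hp1def
  have hp1u1 : p1 u1 = aBot := by simp [hp1def]
  have hp1pB : p1 pB = beta := by
    have h := Ne.symm hu1pB
    simp [hp1def, h]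
  have hp1other : ∀ w, w ≠ u1 → w ≠ pB → p1 w = T.parent w := by
    intro w h1 h2
    simp [hp1def, h1, h2]
  have hparc' : ∀ i ≤ t, T.parent (c i) = c (i - 1) := by
    intro i hi
    rcases Nat.eq_zero_or_pos i with h0 | h0
    · subst h0
      have h00 : (0:ℕ) - 1 = 0 := rfl
      rw [h00, hc0, T.parent_root]
    · have h := hparc (i-1) (by omega)
      rw [show i - 1 + 1 = i by omega] at h
      rw [h]
  have hcpB : ∀ j ≤ t, j ≠ kstar + e1 + 1 → c j ≠ pB := by
    intro j hj hne h
    exact hne (hcinj j hj (kstar+e1+1) hkk h)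
  have hp1c : ∀ j ≤ t, j ≠ kstar + e1 + 1 → p1 (c j) = c (j - 1) := by
    intro j hj hne
    rw [hp1other _ (hcne_u1 j hj) (hcpB j hj hne), hparc' j hj]
  have hp1down : ∀ j, j ≤ kstar + e1 → ∀ n, p1^[n] (c j) = c (j - n) := by
    intro j hj n
    induction n with
    | zero => rfl
    | succ n ih =>
        rw [Function.iterate_succ_apply', ih, hp1c (j-n) (by omega) (by omega), Nat.sub_sub]
  have hrootne_u1 : T.root ≠ u1 := fun h => hu1root h.symm
  have hrootne_pB : T.root ≠ pB := by
    intro h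
    have h2 : c 0 = c (kstar + e1 + 1) := by rw [hc0, h]
    have := hcinj 0 (by omega) (kstar+e1+1) hkk h2
    omega
  have hp1root : p1 T.root = T.root := by
    rw [hp1other _ hrootne_u1 hrootne_pB, T.parent_root]
  have hreach1 : ∀ w : V, ∃ n, p1^[n] w = T.root := by
    intro w
    have key : ∀ m : ℕ, ∀ w : V, T.depthV w = m → ∃ n, p1^[n] w = T.root := by
      intro m
      induction m using Nat.strong_induction_on with
      | _ m ih =>
        intro w hw
        by_cases hroot : w = T.root
        · exact ⟨0, hroot⟩
        by_cases hwu : w = u1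
        · subst hwu
          refine ⟨(kstar + e1) + 1, ?_⟩
          rw [Function.iterate_add_apply]
          simp only [Function.iterate_one]
          rw [hp1u1, haBotdef, hp1down (kstar+e1) le_rfl, Nat.sub_self, hc0]
        by_cases hwp : w = pB
        · subst hwp
          refine ⟨kstar + 1, ?_⟩
          rw [Function.iterate_add_apply]
          simp only [Function.iterate_one]
          rw [hp1pB, hbetadef, hp1down kstar (by omega), Nat.sub_self, hc0]
        · have hdp : T.depthV (T.parent w) < m := by
            have := T.depthV_parent_add_one hroot
            omega
          obtain ⟨n, hn⟩ := ih _ hdp (T.parent w) rfl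
          refine ⟨n + 1, ?_⟩
          rw [Function.iterate_succ_apply, hp1other _ hwu hwp]
          exact hn
    exact key (T.depthV w) w rfl
  set T1 : RTree V := ⟨T.root, p1, hp1root, hreach1⟩ with hT1def
  have hT1par : T1.parent = p1 := rfl
  have hT1root : T1.root = T.root := rfl
  have hd1c : ∀ j, j ≤ kstar + e1 → T1.depthV (c j) = j := by
    intro j hj
    have hup : T1.depthV (c j) ≤ j := by
      apply T1.depthV_le
      rw [hT1par, hp1down j hj j, Nat.sub_self]
      exact hc0
    have hlow : j ≤ T1.depthV (c j) := by
      have h1 := T1.depthV_iterate_eq_root (c j)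
      rw [hT1par, hp1down j hj] at h1
      have h2 : j - T1.depthV (c j) = 0 :=
        hcinj _ (by omega) 0 (by omega) (by rw [h1, hc0])
      omega
    omega
  have hdesc_par : ∀ w : V, T.parent w ∈ descS → w ∈ descS := by
    rintro w ⟨m, hm⟩
    exact ⟨m + 1, by rwa [Function.iterate_succ_apply]⟩
  have hrootdesc : T.root ∉ descS := hdisjCD _ hrootchain
  have hrootrest : T.root ∉ REST := fun h => h.1 hrootchain
  -- p1 agrees with parent along old paths inside descS
  have hH2 : ∀ (n : ℕ) (w : V), T.parent^[n] w ∈ descS → p1^[n] w = T.parent^[n] w := by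
    intro n
    induction n with
    | zero => intro w _; rfl
    | succ n ih =>
        intro w hw
        rw [Function.iterate_succ_apply'] at hw
        have hmem : T.parent^[n] w ∈ descS := hdesc_par _ hw
        have hne1 : T.parent^[n] w ≠ u1 := by
          intro h
          rw [h, ← hbdef] at hw
          exact hdisjCD b hbchain hw
        have hnepB : T.parent^[n] w ≠ pB := by
          intro h
          exact hdisjCD _ (h ▸ hchain_mem _ hkk) hmem
        rw [Function.iterate_succ_apply', Function.iterate_succ_apply', ih w hmem,
          hp1other _ hne1 hnepB]
  -- p1 agrees with parent along old paths inside REST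
  have hHR : ∀ (n : ℕ) (w : V), T.parent^[n] w ∈ REST → p1^[n] w = T.parent^[n] w := by
    intro n
    induction n with
    | zero => intro w _; rfl
    | succ n ih =>
        intro w hw
        rw [Function.iterate_succ_apply'] at hw
        have hmem : T.parent^[n] w ∈ REST := by
          by_cases h1 : T.parent^[n] w ∈ chainF
          · exact absurd (hclosC _ h1) hw.1
          · by_cases h2 : T.parent^[n] w ∈ descS
            · by_cases h3 : T.parent^[n] w = u1
              · rw [h3, ← hbdef] at hw
                exact absurd hbchain hw.1
              · exact absurd (hclosD _ h2 h3) hw.2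
            · exact ⟨h1, h2⟩
        have hne1 : T.parent^[n] w ≠ u1 := fun h => hmem.2 (h ▸ hu1descS)
        have hnepB : T.parent^[n] w ≠ pB := fun h => hmem.1 (h ▸ hchain_mem _ hkk)
        rw [Function.iterate_succ_apply', Function.iterate_succ_apply', ih w hmem,
          hp1other _ hne1 hnepB]
  -- from REST one reaches b with the same number of steps in both trees
  have hRb : ∀ w ∈ REST, ∃ n, p1^[n] w = b ∧ T.parent^[n] w = b := by
    intro w hw
    have key : ∀ m : ℕ, ∀ w ∈ REST, T.depthV w = m → ∃ n, p1^[n] w = b ∧ T.parent^[n] w = b := by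
      intro m
      induction m using Nat.strong_induction_on with
      | _ m ih =>
        intro w hw hwm
        have hwroot : w ≠ T.root := fun h => hrootrest (h ▸ hw)
        have hne1 : w ≠ u1 := fun h => hw.2 (h ▸ hu1descS)
        have hnepB : w ≠ pB := fun h => hw.1 (h ▸ hchain_mem _ hkk)
        rcases hclosR w hw with hp | hp
        · have hdp : T.depthV (T.parent w) < m := by
            have := T.depthV_parent_add_one hwroot
            omega
          obtain ⟨n, hn1, hn2⟩ := ih _ hdp (T.parent w) hp rfl
          exact ⟨n + 1, by rw [Function.iterate_succ_apply, hp1other _ hne1 hnepB]; exact hn1,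
            by rw [Function.iterate_succ_apply]; exact hn2⟩
        · exact ⟨1, by simpa [hp1other _ hne1 hnepB], hp⟩
    exact key (T.depthV w) w hw rfl
  -- descent along the upper chain
  have hp1downU : ∀ j ≤ t, ∀ m, kstar + e1 + 1 ≤ j - m → p1^[m] (c j) = c (j - m) := by
    intro j hj m
    induction m with
    | zero => intro _; rfl
    | succ m ih =>
        intro hm
        rw [Function.iterate_succ_apply', ih (by omega), hp1c (j - m) (by omega) (by omega),
          Nat.sub_sub]
  have hfxroot : ∀ x : ι, f x ≠ T.root := fun x h => hfnotchain x (h ▸ hrootchain)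
  have hfxinn : ∀ x : ι, f x ∈ inn x := fun x => ⟨⟨hfxroot x, 0, rfl⟩, hfnotchain x⟩
  have hfp1desc : ∀ x ∈ P1, T1.pathEdges (f x) = inn x ∪ c '' Set.Icc 1 (kstar + e1) := by
    intro x hx
    have hxd : f x ∈ descS := hx
    have hclosed : ∀ u ∈ inn x ∪ c '' Set.Icc 0 (kstar + e1),
        p1 u ∈ inn x ∪ c '' Set.Icc 0 (kstar + e1) := by
      rintro u (hu | ⟨i, hi, rfl⟩)
      · have hud : u ∈ descS := hinn_desc x hx hu
        by_cases hu1' : u = u1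
        · subst hu1'
          rw [hp1u1]
          exact Or.inr ⟨kstar + e1, by simp only [Set.mem_Icc]; omega, rfl⟩
        · have hnepB : u ≠ pB := fun h => hdisjCD _ (h ▸ hchain_mem _ hkk) hud
          rw [hp1other _ hu1' hnepB]
          have hpd : T.parent u ∈ descS := hclosD _ hud hu1'
          obtain ⟨⟨hne, m, hm⟩, hnc⟩ := hu
          refine Or.inl ⟨⟨fun h => hrootdesc (h ▸ hpd), m + 1, ?_⟩, fun h => hdisjCD _ h hpd⟩
          rw [Function.iterate_succ_apply', hm]
      · simp only [Set.mem_Icc] at hi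
        rw [hp1c i (by omega) (by omega)]
        exact Or.inr ⟨i - 1, by simp only [Set.mem_Icc]; omega, rfl⟩
    ext u
    constructor
    · rintro ⟨hne, n, hn⟩
      rw [hT1par] at hn
      have hmem := RTree.iterate_mem_closed hclosed
        (Or.inl (hfxinn x) : f x ∈ inn x ∪ c '' Set.Icc 0 (kstar + e1)) n
      rw [hn] at hmem
      rcases hmem with h | ⟨i, hi, rfl⟩
      · exact Or.inl h
      · simp only [Set.mem_Icc] at hi
        refine Or.inr ⟨i, by
          simp only [Set.mem_Icc]
          rcases Nat.eq_zero_or_pos i with h0 | h0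
          · exact absurd (by rw [h0, hc0] : c i = T.root) hne
          · omega, rfl⟩
    · rintro (hu | ⟨i, hi, rfl⟩)
      · have hud : u ∈ descS := hinn_desc x hx hu
        obtain ⟨⟨hne, n, hn⟩, hnc⟩ := hu
        refine ⟨hne, n, ?_⟩
        rw [hT1par]
        rw [hH2 n (f x) (by rw [hn]; exact hud)]
        exact hn
      · simp only [Set.mem_Icc] at hi
        obtain ⟨nU, hnU⟩ := hxd
        have h1 : p1^[nU] (f x) = u1 := by
          rw [hH2 nU (f x) (by rw [hnU]; exact hu1descS)]
          exact hnU
        refine ⟨fun h => ?_, ?_⟩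
        · have := hcinj i (by omega) 0 (by omega) (by rw [hc0]; exact h)
          omega
        · rw [hT1par]
          refine ⟨(kstar + e1 - i) + (nU + 1), ?_⟩
          rw [Function.iterate_add_apply]
          have h2 : p1^[nU + 1] (f x) = aBot := by
            rw [Function.iterate_succ_apply', h1, hp1u1]
          rw [h2, haBotdef, hp1down (kstar + e1) le_rfl]
          congr 1
          omega
  have hfp1rest : ∀ x ∉ P1, T1.pathEdges (f x) =
      inn x ∪ (c '' Set.Icc 1 kstar ∪ c '' Set.Icc (kstar + e1 + 1) t) := by
    intro x hx
    have hxr : f x ∈ REST := hfREST x hx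
    have hclosed : ∀ u ∈ inn x ∪ (c '' Set.Icc 0 kstar ∪ c '' Set.Icc (kstar + e1 + 1) t),
        p1 u ∈ inn x ∪ (c '' Set.Icc 0 kstar ∪ c '' Set.Icc (kstar + e1 + 1) t) := by
      rintro u (hu | (⟨i, hi, rfl⟩ | ⟨i, hi, rfl⟩))
      · have hur : u ∈ REST := hinn_rest x hx hu
        have hne1 : u ≠ u1 := fun h => hur.2 (h ▸ hu1descS)
        have hnepB : u ≠ pB := fun h => hur.1 (h ▸ hchain_mem _ hkk)
        rw [hp1other _ hne1 hnepB]
        rcases hclosR u hur with hp | hp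
        · obtain ⟨⟨hne, m, hm⟩, hnc⟩ := hu
          refine Or.inl ⟨⟨fun h => hrootrest (h ▸ hp), m + 1, ?_⟩, hp.1⟩
          rw [Function.iterate_succ_apply', hm]
        · rw [hp, ← hct]
          exact Or.inr (Or.inr ⟨t, by simp only [Set.mem_Icc]; omega, rfl⟩)
      · simp only [Set.mem_Icc] at hi
        rw [hp1c i (by omega) (by omega)]
        exact Or.inr (Or.inl ⟨i - 1, by simp only [Set.mem_Icc]; omega, rfl⟩)
      · simp only [Set.mem_Icc] at hi
        rcases Nat.eq_or_lt_of_le hi.1 with heq | hlt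
        · rw [← heq, ← hpBdef, hp1pB, hbetadef]
          exact Or.inr (Or.inl ⟨kstar, by simp only [Set.mem_Icc]; omega, rfl⟩)
        · rw [hp1c i (by omega) (by omega)]
          exact Or.inr (Or.inr ⟨i - 1, by simp only [Set.mem_Icc]; omega, rfl⟩)
    ext u
    constructor
    · rintro ⟨hne, n, hn⟩
      rw [hT1par] at hn
      have hmem := RTree.iterate_mem_closed hclosed
        (Or.inl (hfxinn x) : f x ∈ inn x ∪ (c '' Set.Icc 0 kstar ∪ c '' Set.Icc (kstar + e1 + 1) t)) n
      rw [hn] at hmem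
      rcases hmem with h | (⟨i, hi, rfl⟩ | ⟨i, hi, rfl⟩)
      · exact Or.inl h
      · simp only [Set.mem_Icc] at hi
        refine Or.inr (Or.inl ⟨i, by
          simp only [Set.mem_Icc]
          rcases Nat.eq_zero_or_pos i with h0 | h0
          · exact absurd (by rw [h0, hc0] : c i = T.root) hne
          · omega, rfl⟩)
      · exact Or.inr (Or.inr ⟨i, hi, rfl⟩)
    · obtain ⟨nB, hb1, hb2⟩ := hRb (f x) hxr
      have h4 : p1^[(t - (kstar + e1 + 1)) + nB] (f x) = pB := by
        rw [Function.iterate_add_apply, hb1, ← hct, hp1downU t le_rfl _ (by omega), hpBdef]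
        congr 1
        omega
      have h5 : p1^[1 + ((t - (kstar + e1 + 1)) + nB)] (f x) = beta := by
        rw [Function.iterate_add_apply, h4]
        simpa using hp1pB
      rintro (hu | (⟨i, hi, rfl⟩ | ⟨i, hi, rfl⟩))
      · have hur : u ∈ REST := hinn_rest x hx hu
        obtain ⟨⟨hne, n, hn⟩, hnc⟩ := hu
        refine ⟨hne, n, ?_⟩
        rw [hT1par, hHR n (f x) (by rw [hn]; exact hur)]
        exact hn
      · simp only [Set.mem_Icc] at hi
        refine ⟨fun h => ?_, ?_⟩
        · have := hcinj i (by omega) 0 (by omega) (by rw [hc0]; exact h)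
          omega
        · rw [hT1par]
          refine ⟨(kstar - i) + (1 + ((t - (kstar + e1 + 1)) + nB)), ?_⟩
          rw [Function.iterate_add_apply, h5, hbetadef, hp1down kstar (by omega)]
          congr 1
          omega
      · simp only [Set.mem_Icc] at hi
        refine ⟨fun h => ?_, ?_⟩
        · have := hcinj i (by omega) 0 (by omega) (by rw [hc0]; exact h)
          omega
        · rw [hT1par]
          refine ⟨(t - i) + nB, ?_⟩
          rw [Function.iterate_add_apply, hb1, ← hct, hp1downU t le_rfl _ (by omega)]
          congr 1
          omega
  have htpos : 1 ≤ t := by omega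
  set topA : V := if e1 = 0 then u1 else c (kstar + 1) with htopAdef
  set pathA : Set V := c '' Set.Icc (kstar + 1) (kstar + e1) with hpathAdef
  set pathB : Set V := c '' Set.Icc (kstar + e1 + 1) t with hpathBdef
  have htopA_mem : topA ∈ pathA ∪ descS := by
    rw [htopAdef]
    split_ifs with h0
    · exact Or.inr hu1descS
    · exact Or.inl ⟨kstar + 1, by simp only [Set.mem_Icc]; omega, rfl⟩
  have hdescA_sub : ∀ (n : ℕ) (w : V), p1^[n] w = topA → w ∈ pathA ∪ descS := by
    intro n
    induction n with
    | zero =>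
        intro w hw
        simp only [Function.iterate_zero, id_eq] at hw
        subst hw
        exact htopA_mem
    | succ n ih =>
        intro w hw
        rw [Function.iterate_succ_apply] at hw
        have hpw := ih _ hw
        by_cases hwu : w = u1
        · exact Or.inr (hwu ▸ hu1descS)
        by_cases hwp : w = pB
        · exfalso
          rw [hwp, hp1pB] at hpw
          rcases hpw with ⟨i, hi, hbe⟩ | hd
          · simp only [Set.mem_Icc] at hi
            rw [hbetadef] at hbe
            have := hcinj i (by omega) kstar (by omega) hbe
            omega
          · exact hdisjCD _ (hbetadef ▸ hchain_mem kstar (by omega)) hd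
        · rw [hp1other _ hwu hwp] at hpw
          rcases hpw with ⟨i, hi, hpe'⟩ | hd
          · simp only [Set.mem_Icc] at hi
            have hwch : w ∈ {w : V | T.parent w = c i ∧ w ≠ c i} := by
              refine ⟨hpe'.symm, fun h => ?_⟩
              rw [h, hparc' i (by omega)] at hpe'
              have := hcinj i (by omega) (i-1) (by omega) hpe'
              omega
            rw [hchildset i (by omega)] at hwch
            have hw' : w = c (i+1) := hwch
            have hine : i + 1 ≠ kstar + e1 + 1 := by
              intro h
              exact hwp (by rw [hw', hpBdef, h])
            exact Or.inl ⟨i+1, by simp only [Set.mem_Icc]; omega, hw'.symm⟩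
          · exact Or.inr (hdesc_par w hd)
  have hdescA_sup : pathA ∪ descS ⊆ T1.desc topA := by
    rintro w (⟨i, hi, rfl⟩ | hd)
    · simp only [Set.mem_Icc] at hi
      refine ⟨i - (kstar + 1), ?_⟩
      rw [hT1par, hp1down i (by omega), htopAdef, if_neg (by omega : ¬ e1 = 0)]
      congr 1
      omega
    · obtain ⟨n, hn⟩ := hd
      have h1 : p1^[n] w = u1 := by
        rw [hH2 n w (by rw [hn]; exact hu1descS)]
        exact hn
      by_cases h0 : e1 = 0
      · exact ⟨n, by rw [hT1par, h1, htopAdef, if_pos h0]⟩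
      · refine ⟨(e1 - 1) + (1 + n), ?_⟩
        rw [hT1par, Function.iterate_add_apply]
        have h2 : p1^[1 + n] w = aBot := by
          rw [Function.iterate_add_apply]
          simp only [Function.iterate_one]
          rw [h1, hp1u1]
        rw [h2, haBotdef, hp1down (kstar + e1) le_rfl, htopAdef, if_neg h0]
        congr 1
        omega
  have hdesc1A : T1.desc topA = pathA ∪ descS := by
    apply Set.Subset.antisymm _ hdescA_sup
    rintro w ⟨n, hn⟩
    rw [hT1par] at hn
    exact hdescA_sub n w hn
  have hpBpathB : pB ∈ pathB := ⟨kstar + e1 + 1, by simp only [Set.mem_Icc]; omega, rfl⟩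
  have hdescB_sub : ∀ (n : ℕ) (w : V), p1^[n] w = pB → w ∈ pathB ∪ REST := by
    intro n
    induction n with
    | zero =>
        intro w hw
        simp only [Function.iterate_zero, id_eq] at hw
        subst hw
        exact Or.inl hpBpathB
    | succ n ih =>
        intro w hw
        rw [Function.iterate_succ_apply] at hw
        have hpw := ih _ hw
        by_cases hwu : w = u1
        · exfalso
          rw [hwu, hp1u1] at hpw
          rcases hpw with ⟨i, hi, hbe⟩ | hd
          · simp only [Set.mem_Icc] at hi
            rw [haBotdef] at hbe
            have := hcinj i (by omega) (kstar + e1) (by omega) hbe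
            omega
          · exact hd.1 (haBotdef ▸ hchain_mem (kstar+e1) (by omega))
        by_cases hwp : w = pB
        · exfalso
          rw [hwp, hp1pB] at hpw
          rcases hpw with ⟨i, hi, hbe⟩ | hd
          · simp only [Set.mem_Icc] at hi
            rw [hbetadef] at hbe
            have := hcinj i (by omega) kstar (by omega) hbe
            omega
          · exact hd.1 (hbetadef ▸ hchain_mem kstar (by omega))
        · rw [hp1other _ hwu hwp] at hpw
          rcases hpw with ⟨i, hi, hpe'⟩ | hd
          · simp only [Set.mem_Icc] at hi
            rcases Nat.lt_or_ge i t with hit | hit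
            · have hwch : w ∈ {w : V | T.parent w = c i ∧ w ≠ c i} := by
                refine ⟨hpe'.symm, fun h => ?_⟩
                rw [h, hparc' i (by omega)] at hpe'
                have := hcinj i (by omega) (i-1) (by omega) hpe'
                omega
              rw [hchildset i hit] at hwch
              have hw' : w = c (i+1) := hwch
              exact Or.inl ⟨i+1, by simp only [Set.mem_Icc]; omega, hw'.symm⟩
            · -- i = t : the parent of w is b
              have hib : c i = b := by rw [show i = t by omega, hct]
              have hpwb : T.parent w = b := by rw [← hpe', hib]
              right
              constructor
              · rintro ⟨j, hj, hjw⟩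
                simp only [Set.mem_Icc] at hj
                rcases Nat.eq_zero_or_pos j with hj0 | hj0
                · rw [hj0] at hjw
                  rw [← hjw, hc0, T.parent_root] at hpwb
                  have := hcinj 0 (by omega) t le_rfl (by rw [hc0, hpwb, hct])
                  omega
                · rw [← hjw, hparc' j (by omega), ← hct] at hpwb
                  have := hcinj (j-1) (by omega) t le_rfl hpwb
                  omega
              · intro hwd
                rcases hwd with ⟨m, hm⟩
                match m, hm with
                | 0, hm => exact hwu hm
                | (m+1), hm =>
                    have : T.parent w ∈ descS := by
                      have hdd : w ∈ descS := ⟨m+1, hm⟩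
                      exact hclosD w hdd hwu
                    rw [hpwb] at this
                    exact hdisjCD b hbchain this
          · right
            by_cases hch : w ∈ chainF
            · exact absurd (hclosC w hch) hd.1
            · by_cases hds : w ∈ descS
              · exfalso
                exact hd.2 (hclosD w hds hwu)
              · exact ⟨hch, hds⟩
  have hdescB_sup : pathB ∪ REST ⊆ T1.desc pB := by
    rintro w (⟨i, hi, rfl⟩ | hr)
    · simp only [Set.mem_Icc] at hi
      refine ⟨i - (kstar + e1 + 1), ?_⟩
      rw [hT1par, hp1downU i (by omega) _ (by omega), hpBdef]
      congr 1
      omega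
    · obtain ⟨nB, hb1, _⟩ := hRb w hr
      refine ⟨(t - (kstar + e1 + 1)) + nB, ?_⟩
      rw [hT1par, Function.iterate_add_apply, hb1, ← hct, hp1downU t le_rfl _ (by omega), hpBdef]
      congr 1
      omega
  have hdesc1B : T1.desc pB = pathB ∪ REST := by
    apply Set.Subset.antisymm _ hdescB_sup
    rintro w ⟨n, hn⟩
    rw [hT1par] at hn
    exact hdescB_sub n w hn
  -- children of the chain in the new tree
  have htopA_ne_pB : topA ≠ pB := by
    rw [htopAdef]
    split_ifs with h0
    · exact hu1pB
    · intro h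
      have := hcinj (kstar+1) (by omega) (kstar+e1+1) hkk h
      omega
  have htopA_ne_beta : topA ≠ beta := by
    rw [htopAdef, hbetadef]
    split_ifs with h0
    · exact fun h => hcne_u1 kstar (by omega) h.symm
    · intro h
      have := hcinj (kstar+1) (by omega) kstar (by omega) h
      omega
  have hpB_ne_beta : pB ≠ beta := by
    rw [hpBdef, hbetadef]
    intro h
    have := hcinj (kstar+e1+1) hkk kstar (by omega) h
    omega
  have hchildbeta : {w : V | p1 w = beta ∧ w ≠ beta} = {topA, pB} := by
    ext w
    simp only [Set.mem_setOf_eq, Set.mem_insert_iff, Set.mem_singleton_iff]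
    constructor
    · rintro ⟨h1, h2⟩
      by_cases hwu : w = u1
      · left
        subst hwu
        rw [hp1u1, haBotdef, hbetadef] at h1
        have he0 : e1 = 0 := by
          have := hcinj (kstar+e1) (by omega) kstar (by omega) h1
          omega
        rw [htopAdef, if_pos he0]
      by_cases hwp : w = pB
      · right; exact hwp
      · left
        rw [hp1other _ hwu hwp, hbetadef] at h1
        rw [hbetadef] at h2
        have hkt : kstar < t := by omega
        have hwch : w ∈ {w : V | T.parent w = c kstar ∧ w ≠ c kstar} := ⟨h1, h2⟩
        rw [hchildset kstar hkt] at hwch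
        have hw' : w = c (kstar + 1) := hwch
        have he0 : ¬ e1 = 0 := by
          intro h0
          exact hwp (by rw [hw', hpBdef, h0])
        rw [htopAdef, if_neg he0, hw']
    · rintro (rfl | rfl)
      · refine ⟨?_, htopA_ne_beta⟩
        rw [htopAdef]
        split_ifs with h0
        · rw [hp1u1, haBotdef, hbetadef, h0, Nat.add_zero]
        · rw [hp1c (kstar+1) (by omega) (by omega), hbetadef]
          simp only [Nat.add_sub_cancel]
      · exact ⟨hp1pB, hpB_ne_beta⟩
  have hccbeta : T1.childCount beta = 2 := by
    unfold RTree.childCount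
    rw [hT1par, hchildbeta, Set.ncard_pair htopA_ne_pB]
  have hccj : ∀ j, j < kstar → T1.childCount (c j) = 1 := by
    intro j hj
    unfold RTree.childCount
    rw [hT1par]
    have hset : {w : V | p1 w = c j ∧ w ≠ c j} = {c (j+1)} := by
      ext w
      simp only [Set.mem_setOf_eq, Set.mem_singleton_iff]
      constructor
      · rintro ⟨h1, h2⟩
        by_cases hwu : w = u1
        · exfalso
          subst hwu
          rw [hp1u1, haBotdef] at h1
          have := hcinj (kstar+e1) (by omega) j (by omega) h1
          omega
        by_cases hwp : w = pB
        · exfalso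
          subst hwp
          rw [hp1pB, hbetadef] at h1
          have := hcinj kstar (by omega) j (by omega) h1
          omega
        · rw [hp1other _ hwu hwp] at h1
          have hwch : w ∈ {w : V | T.parent w = c j ∧ w ≠ c j} := ⟨h1, h2⟩
          rw [hchildset j (by omega)] at hwch
          exact hwch
      · intro hw
        subst hw
        refine ⟨?_, (hchildmem j (by omega)).2⟩
        rw [hp1c (j+1) (by omega) (by omega)]
        simp only [Nat.add_sub_cancel]
    rw [hset, Set.ncard_singleton]
  have hanc_beta : ∀ w : V, (∀ i, i ≤ kstar → w ≠ c i) → ∃ n, p1^[n] w = beta := by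
    intro w hwc
    by_cases hch : w ∈ chainF
    · obtain ⟨i, hi, rfl⟩ := hch
      simp only [Set.mem_Icc] at hi
      have hik : kstar < i := by
        rcases Nat.lt_or_ge kstar i with h | h
        · exact h
        · exact absurd rfl (hwc i (by omega))
      rcases Nat.lt_or_ge i (kstar + e1 + 1) with h2 | h2
      · refine ⟨i - kstar, ?_⟩
        rw [hp1down i (by omega), hbetadef]
        congr 1
        omega
      · refine ⟨1 + (i - (kstar + e1 + 1)), ?_⟩
        rw [Function.iterate_add_apply, hp1downU i (by omega) _ (by omega),
          show i - (i - (kstar+e1+1)) = kstar+e1+1 by omega, ← hpBdef]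
        simpa using hp1pB
    · by_cases hd : w ∈ descS
      · obtain ⟨n, hn⟩ := hd
        have h1 : p1^[n] w = u1 := by
          rw [hH2 n w (by rw [hn]; exact hu1descS)]
          exact hn
        refine ⟨e1 + (1 + n), ?_⟩
        rw [Function.iterate_add_apply, Function.iterate_add_apply]
        simp only [Function.iterate_one]
        rw [h1, hp1u1, haBotdef, hp1down (kstar+e1) le_rfl, hbetadef]
        congr 1
        omega
      · obtain ⟨nB, hb1, _⟩ := hRb w ⟨hch, hd⟩
        refine ⟨(1 + (t - (kstar+e1+1))) + nB, ?_⟩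
        rw [Function.iterate_add_apply, hb1, Function.iterate_add_apply, ← hct,
          hp1downU t le_rfl _ (by omega),
          show t - (t - (kstar+e1+1)) = kstar + e1 + 1 by omega, ← hpBdef]
        simpa using hp1pB
  -- primary branches of the new tree
  have hprimchar : ∀ u' : V, T1.IsPrimaryBranch u' → u' = topA ∨ u' = pB := by
    rintro u' ⟨hne, h2, h3⟩
    by_cases hp : ∀ i, i ≤ kstar → T1.parent u' ≠ c i
    · exfalso
      obtain ⟨n, hn⟩ := hanc_beta (T1.parent u') hp
      have hstr : T1.IsStrictAncestor beta (T1.parent u') := by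
        refine ⟨fun h => hp kstar (by omega) (by rw [← h, hbetadef]), n, ?_⟩
        rw [hT1par]
        exact hn
      have := h3 beta hstr
      rw [hccbeta] at this
      omega
    · push_neg at hp
      obtain ⟨i, hi, hpi⟩ := hp
      rcases Nat.lt_or_ge i kstar with hik | hik
      · exfalso
        rw [hpi] at h2
        rw [hccj i hik] at h2
        omega
      · have hik' : i = kstar := by omega
        have hu'ne : u' ≠ beta := by
          intro h
          apply hne
          apply T1.eq_root_of_parent_fix
          rw [hpi, hik', ← hbetadef, ← h]
        have hu'mem : u' ∈ {w : V | p1 w = beta ∧ w ≠ beta} :=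
          ⟨by rw [← hT1par, hpi, hik', ← hbetadef], hu'ne⟩
        rw [hchildbeta] at hu'mem
        simpa using hu'mem
  -- capacity of the two new primary branches
  have hpathA_chain : ∀ u ∈ pathA, u ∈ chainF := by
    rintro u ⟨i, hi, rfl⟩
    simp only [Set.mem_Icc] at hi
    exact hchain_mem i (by omega)
  have hpathB_chain : ∀ u ∈ pathB, u ∈ chainF := by
    rintro u ⟨i, hi, rfl⟩
    simp only [Set.mem_Icc] at hi
    exact hchain_mem i (by omega)
  have hdA_card : (T1.desc topA).ncard = e1 + s1 := by
    rw [hdesc1A, Set.ncard_union_eq (Set.disjoint_left.mpr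
      (fun u hu hd => hdisjCD u (hpathA_chain u hu) hd)) (Set.toFinite _) (Set.toFinite _),
      hpathAdef, hcard_c (kstar+1) (kstar+e1) (by omega)]
    omega
  have hdB_card : (T1.desc pB).ncard = e' + sR := by
    rw [hdesc1B, Set.ncard_union_eq (Set.disjoint_left.mpr
      (fun u hu hr => hr.1 (hpathB_chain u hu))) (Set.toFinite _) (Set.toFinite _),
      hpathBdef, hcard_c (kstar+e1+1) t le_rfl]
    omega
  have helemsA : {x : ι | f x ∈ T1.desc topA} = P1 := by
    ext x
    rw [hdesc1A]
    simp only [Set.mem_setOf_eq, Set.mem_union]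
    constructor
    · rintro (hp | hd)
      · exact absurd (hpathA_chain _ hp) (hfnotchain x)
      · exact hd
    · exact fun h => Or.inr h
  have helemsB : {x : ι | f x ∈ T1.desc pB} = P' := by
    ext x
    rw [hdesc1B]
    simp only [Set.mem_setOf_eq, Set.mem_union]
    constructor
    · rintro (hp | hr)
      · exact absurd (hpathB_chain _ hp) (hfnotchain x)
      · exact hr.2
    · exact fun h => Or.inr (hfREST x h)
  have hparA : T1.parent topA = beta := by
    rw [hT1par, htopAdef]
    split_ifs with h0
    · rw [hp1u1, haBotdef, hbetadef, h0, Nat.add_zero]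
    · rw [hp1c (kstar+1) (by omega) (by omega), hbetadef]
      simp only [Nat.add_sub_cancel]
  have hparB : T1.parent pB = beta := by
    rw [hT1par]
    exact hp1pB
  have hdbeta : T1.depthV beta = kstar := by
    rw [hbetadef]
    exact hd1c kstar (by omega)
  have hcapA1 : AtCapacity (vecRk F v) T1 f topA := by
    unfold AtCapacity
    rw [helemsA, hdA_card, hparA, hdbeta]
    exact hcapA
  have hcapB1 : AtCapacity (vecRk F v) T1 f pB := by
    unfold AtCapacity
    rw [helemsB, hdB_card, hparB, hdbeta]
    exact hcapB
  have ht_le : t ≤ T.depth := T.depthV_le_depth b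
  -- assemble everything
  refine ⟨T1, ⟨?_, ?_, ?_⟩, ?_, ?_⟩
  · -- leaves
    intro x u hu
    rw [hT1par] at hu
    by_cases hwu : u = u1
    · exfalso
      apply hfnotchain x
      rw [hwu, hp1u1, haBotdef] at hu
      rw [← hu]
      exact hchain_mem (kstar+e1) (by omega)
    · by_cases hwp : u = pB
      · exfalso
        apply hfnotchain x
        rw [hwp, hp1pB, hbetadef] at hu
        rw [← hu]
        exact hchain_mem kstar (by omega)
      · rw [hp1other _ hwu hwp] at hu
        exact hleaf x u hu
  · -- edge count
    exact hedge
  · -- validity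
    intro X'
    rcases Set.eq_empty_or_nonempty X' with rfl | hXne
    · rw [vecRk_empty]
      exact Nat.zero_le _
    by_cases hA : (X' ∩ P1).Nonempty
    · by_cases hB : (X' ∩ P1ᶜ).Nonempty
      · -- X' meets both parts : same bound as in the original tree
        have hun : (⋃ x ∈ X', T1.pathEdges (f x)) = (⋃ x ∈ X', inn x) ∪ c '' Set.Icc 1 t := by
          ext u
          simp only [Set.mem_iUnion, Set.mem_union]
          constructor
          · rintro ⟨x, hx, hu⟩
            by_cases hxP : x ∈ P1
            · rw [hfp1desc x hxP] at hu
              rcases hu with h | ⟨i, hi, rfl⟩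
              · exact Or.inl ⟨x, hx, h⟩
              · simp only [Set.mem_Icc] at hi
                exact Or.inr ⟨i, by simp only [Set.mem_Icc]; omega, rfl⟩
            · rw [hfp1rest x hxP] at hu
              rcases hu with h | (⟨i, hi, rfl⟩ | ⟨i, hi, rfl⟩)
              · exact Or.inl ⟨x, hx, h⟩
              · simp only [Set.mem_Icc] at hi
                exact Or.inr ⟨i, by simp only [Set.mem_Icc]; omega, rfl⟩
              · simp only [Set.mem_Icc] at hi
                exact Or.inr ⟨i, by simp only [Set.mem_Icc]; omega, rfl⟩
          · rintro (⟨x, hx, h⟩ | ⟨i, hi, rfl⟩)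
            · refine ⟨x, hx, ?_⟩
              by_cases hxP : x ∈ P1
              · rw [hfp1desc x hxP]
                exact Or.inl h
              · rw [hfp1rest x hxP]
                exact Or.inl h
            · simp only [Set.mem_Icc] at hi
              rcases Nat.lt_or_ge i (kstar + e1 + 1) with h2 | h2
              · obtain ⟨x, hx⟩ := hA
                refine ⟨x, hx.1, ?_⟩
                rw [hfp1desc x hx.2]
                exact Or.inr ⟨i, by simp only [Set.mem_Icc]; omega, rfl⟩
              · obtain ⟨x, hx⟩ := hB
                refine ⟨x, hx.1, ?_⟩
                rw [hfp1rest x hx.2]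
                exact Or.inr (Or.inr ⟨i, by simp only [Set.mem_Icc]; omega, rfl⟩)
        have hd : Disjoint (⋃ x ∈ X', inn x) (c '' Set.Icc 1 t) := by
          rw [Set.disjoint_left]
          rintro u hu hu2
          simp only [Set.mem_iUnion] at hu
          obtain ⟨x, hx, hu⟩ := hu
          refine hu.2 ?_
          obtain ⟨i, hi, rfl⟩ := hu2
          simp only [Set.mem_Icc] at hi
          exact hchain_mem i (by omega)
        rw [hun, Set.ncard_union_eq hd (Set.toFinite _) (Set.toFinite _), hcard_c 1 t le_rfl]
        have := hvalid' X' hXne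
        omega
      · -- X' entirely inside P1
        have hsub : ∀ x ∈ X', x ∈ P1 := by
          intro x hx
          by_contra h
          exact hB ⟨x, hx, h⟩
        have hun : (⋃ x ∈ X', T1.pathEdges (f x)) =
            (⋃ x ∈ X', inn x) ∪ c '' Set.Icc 1 (kstar + e1) := by
          ext u
          simp only [Set.mem_iUnion, Set.mem_union]
          constructor
          · rintro ⟨x, hx, hu⟩
            rw [hfp1desc x (hsub x hx)] at hu
            rcases hu with h | h
            · exact Or.inl ⟨x, hx, h⟩
            · exact Or.inr h
          · rintro (⟨x, hx, h⟩ | h)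
            · exact ⟨x, hx, by rw [hfp1desc x (hsub x hx)]; exact Or.inl h⟩
            · obtain ⟨x0, hx0⟩ := hXne
              exact ⟨x0, hx0, by rw [hfp1desc x0 (hsub x0 hx0)]; exact Or.inr h⟩
        have hd : Disjoint (⋃ x ∈ X', inn x) (c '' Set.Icc 1 (kstar + e1)) := by
          rw [Set.disjoint_left]
          rintro u hu hu2
          simp only [Set.mem_iUnion] at hu
          obtain ⟨x, hx, hu⟩ := hu
          refine hu.2 ?_
          obtain ⟨i, hi, rfl⟩ := hu2
          simp only [Set.mem_Icc] at hi
          exact hchain_mem i (by omega)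
        rw [hun, Set.ncard_union_eq hd (Set.toFinite _) (Set.toFinite _),
          hcard_c 1 (kstar + e1) (by omega)]
        -- rank bound via the modular law
        haveI : FiniteDimensional F (Submodule.span F (v '' X')) :=
          FiniteDimensional.span_of_finite F ((Set.toFinite X').image v)
        have hZle : Submodule.span F (v '' X') ≤ Submodule.span F (v '' P1) :=
          Submodule.span_mono (Set.image_mono (fun x hx => hsub x hx))
        have hinf_le : Module.finrank F
            ↥(Submodule.span F (v '' X') ⊓ Submodule.span F (v '' P')) ≤ kstar := by
          rw [hkdef]
          exact Submodule.finrank_mono (inf_le_inf_right _ hZle)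
        have hmod2 := Submodule.finrank_sup_add_finrank_inf_eq
          (Submodule.span F (v '' X')) (Submodule.span F (v '' P'))
        rw [← vecRk_span_union] at hmod2
        have hmod3 : vecRk F v (X' ∪ P') + Module.finrank F
            ↥(Submodule.span F (v '' X') ⊓ Submodule.span F (v '' P')) =
            vecRk F v X' + rP' := hmod2
        have hup : vecRk F v (X' ∪ P') ≤ t + ((⋃ x ∈ X', inn x).ncard + sR) := by
          have h1 := hvalid' (X' ∪ P') (by obtain ⟨x0, hx0⟩ := hXne; exact ⟨x0, Or.inl hx0⟩)
          have h2 : (⋃ x ∈ X' ∪ P', inn x) ⊆ (⋃ x ∈ X', inn x) ∪ (⋃ x ∈ P', inn x) := by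
            intro u hu
            simp only [Set.mem_iUnion, Set.mem_union] at hu ⊢
            obtain ⟨x, hx | hx, hu⟩ := hu
            · exact Or.inl ⟨x, hx, hu⟩
            · exact Or.inr ⟨x, hx, hu⟩
          have h3 : (⋃ x ∈ X' ∪ P', inn x).ncard ≤
              (⋃ x ∈ X', inn x).ncard + (⋃ x ∈ P', inn x).ncard :=
            le_trans (Set.ncard_le_ncard h2 (Set.toFinite _)) (Set.ncard_union_le _ _)
          have h4 : (⋃ x ∈ P', inn x).ncard ≤ sR :=
            Set.ncard_le_ncard (Set.iUnion₂_subset fun x hx => hinn_rest x hx) (Set.toFinite _)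
          omega
        omega
    · -- X' entirely outside P1
      have hsub : ∀ x ∈ X', x ∉ P1 := by
        intro x hx h
        exact hA ⟨x, hx, h⟩
      have hun : (⋃ x ∈ X', T1.pathEdges (f x)) =
          (⋃ x ∈ X', inn x) ∪ (c '' Set.Icc 1 kstar ∪ c '' Set.Icc (kstar + e1 + 1) t) := by
        ext u
        simp only [Set.mem_iUnion, Set.mem_union]
        constructor
        · rintro ⟨x, hx, hu⟩
          rw [hfp1rest x (hsub x hx)] at hu
          rcases hu with h | (h | h)
          · exact Or.inl ⟨x, hx, h⟩
          · exact Or.inr (Or.inl h)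
          · exact Or.inr (Or.inr h)
        · rintro (⟨x, hx, h⟩ | (h | h))
          · exact ⟨x, hx, by rw [hfp1rest x (hsub x hx)]; exact Or.inl h⟩
          · obtain ⟨x0, hx0⟩ := hXne
            exact ⟨x0, hx0, by rw [hfp1rest x0 (hsub x0 hx0)]; exact Or.inr (Or.inl h)⟩
          · obtain ⟨x0, hx0⟩ := hXne
            exact ⟨x0, hx0, by rw [hfp1rest x0 (hsub x0 hx0)]; exact Or.inr (Or.inr h)⟩
      have hd0 : Disjoint (c '' Set.Icc 1 kstar) (c '' Set.Icc (kstar + e1 + 1) t) := by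
        rw [Set.disjoint_left]
        rintro u ⟨i, hi, rfl⟩ ⟨j, hj, hj2⟩
        simp only [Set.mem_Icc] at hi hj
        have := hcinj j (by omega) i (by omega) hj2
        omega
      have hd : Disjoint (⋃ x ∈ X', inn x)
          (c '' Set.Icc 1 kstar ∪ c '' Set.Icc (kstar + e1 + 1) t) := by
        rw [Set.disjoint_left]
        rintro u hu hu2
        simp only [Set.mem_iUnion] at hu
        obtain ⟨x, hx, hu⟩ := hu
        refine hu.2 ?_
        rcases hu2 with ⟨i, hi, rfl⟩ | ⟨i, hi, rfl⟩ <;>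
          simp only [Set.mem_Icc] at hi <;>
          exact hchain_mem i (by omega)
      rw [hun, Set.ncard_union_eq hd (Set.toFinite _) (Set.toFinite _),
        Set.ncard_union_eq hd0 (Set.toFinite _) (Set.toFinite _),
        hcard_c 1 kstar (by omega), hcard_c (kstar + e1 + 1) t le_rfl]
      haveI : FiniteDimensional F (Submodule.span F (v '' X')) :=
        FiniteDimensional.span_of_finite F ((Set.toFinite X').image v)
      have hZle : Submodule.span F (v '' X') ≤ Submodule.span F (v '' P') :=
        Submodule.span_mono (Set.image_mono (fun x hx => hsub x hx))
      have hinf_le : Module.finrank F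
          ↥(Submodule.span F (v '' X') ⊓ Submodule.span F (v '' P1)) ≤ kstar := by
        rw [hkdef]
        have hle2 : Submodule.span F (v '' X') ⊓ Submodule.span F (v '' P1) ≤
            Submodule.span F (v '' P1) ⊓ Submodule.span F (v '' P') :=
          le_inf inf_le_right (le_trans inf_le_left hZle)
        exact Submodule.finrank_mono hle2
      have hmod2 := Submodule.finrank_sup_add_finrank_inf_eq
        (Submodule.span F (v '' X')) (Submodule.span F (v '' P1))
      rw [← vecRk_span_union] at hmod2
      have hmod3 : vecRk F v (X' ∪ P1) + Module.finrank F
          ↥(Submodule.span F (v '' X') ⊓ Submodule.span F (v '' P1)) =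
          vecRk F v X' + rP1 := hmod2
      have hup : vecRk F v (X' ∪ P1) ≤ t + ((⋃ x ∈ X', inn x).ncard + s1) := by
        have h1 := hvalid' (X' ∪ P1) (by obtain ⟨x0, hx0⟩ := hXne; exact ⟨x0, Or.inl hx0⟩)
        have h2 : (⋃ x ∈ X' ∪ P1, inn x) ⊆ (⋃ x ∈ X', inn x) ∪ (⋃ x ∈ P1, inn x) := by
          intro u hu
          simp only [Set.mem_iUnion, Set.mem_union] at hu ⊢
          obtain ⟨x, hx | hx, hu⟩ := hu
          · exact Or.inl ⟨x, hx, hu⟩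
          · exact Or.inr ⟨x, hx, hu⟩
        have h3 : (⋃ x ∈ X' ∪ P1, inn x).ncard ≤
            (⋃ x ∈ X', inn x).ncard + (⋃ x ∈ P1, inn x).ncard :=
          le_trans (Set.ncard_le_ncard h2 (Set.toFinite _)) (Set.ncard_union_le _ _)
        have h4 : (⋃ x ∈ P1, inn x).ncard ≤ s1 :=
          Set.ncard_le_ncard (Set.iUnion₂_subset fun x hx => hinn_desc x hx) (Set.toFinite _)
        omega
      omega
  · -- the depth does not increase
    apply Finset.sup_le
    intro w _
    by_cases hch : w ∈ chainF
    · obtain ⟨j, hj, rfl⟩ := hch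
      simp only [Set.mem_Icc] at hj
      rcases Nat.lt_or_ge j (kstar + e1 + 1) with h2 | h2
      · have := hd1c j (by omega)
        omega
      · have hb2 : T1.depthV (c j) ≤ (kstar + 1) + (j - (kstar + e1 + 1)) := by
          apply T1.depthV_le
          show p1^[(kstar + 1) + (j - (kstar + e1 + 1))] (c j) = T.root
          rw [Function.iterate_add_apply, hp1downU j (by omega) _ (by omega),
            show j - (j - (kstar + e1 + 1)) = kstar + e1 + 1 by omega, ← hpBdef,
            Function.iterate_succ_apply, hp1pB, hbetadef, hp1down kstar (by omega),
            Nat.sub_self, hc0]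
        omega
    · by_cases hd : w ∈ descS
      · obtain ⟨n, hn⟩ := hd
        have hdw : T.depthV w = n + (t + 1) := by
          rw [T.depthV_eq_of_iterate hu1root hn, hdepthu1]
        have hwd : T.depthV w ≤ T.depth := T.depthV_le_depth w
        have h1 : p1^[n] w = u1 := by
          rw [hH2 n w (by rw [hn]; exact hu1descS)]
          exact hn
        have hb2 : T1.depthV w ≤ ((kstar + e1) + 1) + n := by
          apply T1.depthV_le
          show p1^[((kstar + e1) + 1) + n] w = T.root
          rw [Function.iterate_add_apply, h1, Function.iterate_succ_apply, hp1u1, haBotdef,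
            hp1down (kstar + e1) le_rfl, Nat.sub_self, hc0]
        omega
      · have hr : w ∈ REST := ⟨hch, hd⟩
        obtain ⟨nB, hb1, hb2'⟩ := hRb w hr
        have hdw : T.depthV w = nB + t := by
          rw [T.depthV_eq_of_iterate (T.ne_root_of_depthV_pos (by omega : 0 < T.depthV b)) hb2']
        have hwd : T.depthV w ≤ T.depth := T.depthV_le_depth w
        have hb3 : T1.depthV w ≤ ((kstar + 1) + (t - (kstar + e1 + 1))) + nB := by
          apply T1.depthV_le
          show p1^[((kstar + 1) + (t - (kstar + e1 + 1))) + nB] w = T.root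
          rw [Function.iterate_add_apply, hb1, ← hct, Function.iterate_add_apply,
            hp1downU t le_rfl _ (by omega),
            show t - (t - (kstar + e1 + 1)) = kstar + e1 + 1 by omega, ← hpBdef,
            Function.iterate_succ_apply, hp1pB, hbetadef, hp1down kstar (by omega),
            Nat.sub_self, hc0]
        omega
  · -- all primary branches are at capacity
    intro u' hpr
    rcases hprimchar u' hpr with rfl | rfl
    · exact hcapA1
    · exact hcapB1


end Surgery2

/-- Lemma: primary branches can be brought to capacity. Let `(T, f)`
be a depth-decomposition of a vector matroid of depth `d`.  Then there exists a
depth-decomposition `(T', f')` of the matroid of depth at most `d` in which every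
primary branch is at capacity. -/
theorem exists_depthDecomp_primary_atCapacity (F W ι : Type) [Field F] [AddCommGroup W]
    [Module F W] [Fintype ι] (v : ι → W) {V : Type} [Fintype V] [DecidableEq V]
    (T : RTree V) (f : ι → V)
    (hdd : IsDepthDecompOn (vecRk F v) (vecRk F v Set.univ) T f)
    (d : ℕ) (hd : T.depth = d) :
    ∃ (nV : ℕ) (T' : RTree (Fin (nV + 1))) (f' : ι → Fin (nV + 1)),
      IsDepthDecompOn (vecRk F v) (vecRk F v Set.univ) T' f' ∧ T'.depth ≤ d ∧
      ∀ u' : Fin (nV + 1), T'.IsPrimaryBranch u' → AtCapacity (vecRk F v) T' f' u' := by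
  classical
  by_cases hcap : ∀ u' : V, T.IsPrimaryBranch u' → AtCapacity (vecRk F v) T f u'
  · exact transport_good (vecRk F v) (vecRk F v Set.univ) T f hdd (le_of_eq hd) hcap
  · push_neg at hcap
    obtain ⟨u1, hprim, hbad⟩ := hcap
    obtain ⟨T1, hdd1, hdep1, hcap1⟩ := surgery v T f hdd u1 hprim hbad
    exact transport_good (vecRk F v) (vecRk F v Set.univ) T1 f hdd1 (hd ▸ hdep1) hcap1
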